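/- Let μ be a strictly aperiodic probability measure on a locally compact Hausdorff group G and let π be a strongly continuous unitary representation of G on a complex Hilbert space H, with μ̂(π)x = ∫_G π(g)x dμ(g). Then the operator μ̂(π) has no eigenvalue ξ with |ξ| = 1 other than possibly ξ = 1; that is, if μ̂(π)x = ξx for some nonzero x ∈ H and |ξ| = 1, then ξ = 1. -/

import Mathlib

open MeasureTheory Filter Topology

/-- The support of a Borel measure. -/
def measureSupport {G : Type*} [TopologicalSpace G] [MeasurableSpace G]
    (μ : Measure G) : Set G :=
  {x : G | ∀ U : Set G, IsOpen U → x ∈ U → 0 < μ U}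

/-- A probability measure `μ` on a group `G` is strictly aperiodic if its support is not
contained in a left coset of a proper closed subgroup of `G`. -/
def IsStrictlyAperiodic {G : Type*} [Group G] [TopologicalSpace G] [MeasurableSpace G]
    (μ : Measure G) : Prop :=
  ¬ ∃ (H : Subgroup G) (g : G), IsClosed (H : Set G) ∧ (H : Set G) ≠ Set.univ ∧
      measureSupport μ ⊆ (fun h => g * h) '' (H : Set G)

/-- Let `μ` be a strictly aperiodic probability measure on a locally compact
Hausdorff group `G` and `π` a strongly continuous unitary representation of `G` on a complex
Hilbert space `H`, with `μ̂(π) x = ∫ π(g) x dμ(g)`.  Then `μ̂(π)` has no unimodular eigenvalue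
other than possibly `1`: if `μ̂(π) x = ξ x` for some `x ≠ 0` and `‖ξ‖ = 1`, then `ξ = 1`. -/
theorem stmt4 {G : Type*} [Group G] [TopologicalSpace G] [IsTopologicalGroup G]
    [LocallyCompactSpace G] [T2Space G] [MeasurableSpace G] [BorelSpace G]
    {H : Type*} [NormedAddCommGroup H] [InnerProductSpace ℂ H] [CompleteSpace H]
    (μ : Measure G) [IsProbabilityMeasure μ] (hμ : IsStrictlyAperiodic μ)
    (π : G → H →L[ℂ] H)
    (hπ_mul : ∀ g h : G, π (g * h) = (π g).comp (π h))
    (hπ_one : π 1 = ContinuousLinearMap.id ℂ H)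
    (hπ_iso : ∀ (g : G) (x : H), ‖π g x‖ = ‖x‖)
    (hπ_cont : ∀ x : H, Continuous fun g => π g x)
    (ξ : ℂ) (hξ : ‖ξ‖ = 1) (x : H) (hx : x ≠ 0)
    (heig : (∫ g, π g x ∂μ) = ξ • x) :
    ξ = 1 := by
  classical
  have hξ0 : ξ ≠ 0 := fun h => by simp [h] at hξ
  -- the function g ↦ π g x is integrable (else the integral would be 0 ≠ ξ • x)
  have hint : Integrable (fun g => π g x) μ := by
    by_contra h
    rw [integral_undef h] at heig
    exact hx (by simpa [hξ0] using heig.symm)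
  -- norm of ξ • x
  have hnξx : ‖ξ • x‖ = ‖x‖ := by rw [norm_smul, hξ, one_mul]
  -- the nonnegative function f
  set f : G → ℝ := fun g => ‖π g x - ξ • x‖ ^ 2 with hf
  have hf_nonneg : 0 ≤ f := fun g => sq_nonneg _
  have hf_sm : AEStronglyMeasurable f μ := by
    have h1 : AEStronglyMeasurable (fun g => ‖π g x - ξ • x‖) μ :=
      (hint.aestronglyMeasurable.sub aestronglyMeasurable_const).norm
    have := h1.mul h1
    refine this.congr (Filter.Eventually.of_forall fun g => ?_)
    simp [f, sq]
  have hf_int : Integrable f μ := by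
    refine Integrable.mono' (integrable_const ((2 * ‖x‖) ^ 2)) hf_sm ?_
    refine Filter.Eventually.of_forall fun g => ?_
    have h1 : ‖π g x - ξ • x‖ ≤ 2 * ‖x‖ := by
      calc ‖π g x - ξ • x‖ ≤ ‖π g x‖ + ‖ξ • x‖ := norm_sub_le _ _
        _ = 2 * ‖x‖ := by rw [hπ_iso, hnξx]; ring
    have h0 : (0:ℝ) ≤ ‖π g x - ξ • x‖ := norm_nonneg _
    have hfg : f g = ‖π g x - ξ • x‖ ^ 2 := rfl
    rw [hfg, Real.norm_eq_abs, abs_of_nonneg (sq_nonneg _)]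
    exact pow_le_pow_left₀ h0 h1 2
  -- ∫ f = 0
  have hcc : (starRingEnd ℂ) ξ * ξ = 1 := by
    rw [mul_comm, Complex.mul_conj, Complex.normSq_eq_norm_sq, hξ]
    norm_num
  have hRe : ∫ g, RCLike.re (inner ℂ (ξ • x) (π g x) : ℂ) ∂μ = ‖x‖ ^ 2 := by
    rw [integral_re (hint.const_inner _), integral_inner hint, heig,
      inner_smul_left, inner_smul_right, ← mul_assoc, hcc, one_mul,
      inner_self_eq_norm_sq_to_K]
    norm_cast
  have hint0 : ∫ g, f g ∂μ = 0 := by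
    have hexp : ∀ g, f g = 2 * ‖x‖ ^ 2 - 2 * RCLike.re (inner ℂ (ξ • x) (π g x) : ℂ) := by
      intro g
      have hns := norm_sub_sq (𝕜 := ℂ) (ξ • x) (π g x)
      have h2 : ‖π g x - ξ • x‖ = ‖ξ • x - π g x‖ := by rw [norm_sub_rev]
      simp only [f, h2, hns, hnξx, hπ_iso]
      ring
    calc ∫ g, f g ∂μ
        = ∫ g, (2 * ‖x‖ ^ 2 - 2 * RCLike.re (inner ℂ (ξ • x) (π g x) : ℂ)) ∂μ := by
          simp only [hexp]
      _ = 2 * ‖x‖ ^ 2 - 2 * ∫ g, RCLike.re (inner ℂ (ξ • x) (π g x) : ℂ) ∂μ := by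
          rw [integral_sub (integrable_const _) (((hint.const_inner _).re).const_mul 2),
            integral_const, integral_const_mul]
          simp only [measureReal_def, measure_univ, ENNReal.toReal_one, one_smul, smul_eq_mul, one_mul]
      _ = 0 := by rw [hRe]; ring
  have hae : f =ᵐ[μ] 0 := (integral_eq_zero_iff_of_nonneg hf_nonneg hf_int).mp hint0
  -- the set A where π g x = ξ • x
  set A : Set G := {g : G | π g x = ξ • x} with hA
  have hA_closed : IsClosed A := isClosed_eq (hπ_cont x) continuous_const
  have hAc : μ Aᶜ = 0 := by
    refine measure_mono_null ?_ hae
    intro g hg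
    simp only [Set.mem_compl_iff, hA, Set.mem_setOf_eq] at hg
    simp only [Set.mem_setOf_eq, Pi.zero_apply, f]
    intro h
    have h2 : ‖π g x - ξ • x‖ = 0 := by
      have h3 : ‖π g x - ξ • x‖ ^ 2 = 0 := h
      exact (pow_eq_zero_iff two_ne_zero).mp h3
    exact hg (sub_eq_zero.mp (norm_eq_zero.mp h2))
  -- A is nonempty
  have hA_ne : A.Nonempty := by
    refine nonempty_of_measure_ne_zero (μ := μ) (s := A) fun h0 => ?_
    have hle := measure_union_le (μ := μ) A Aᶜ
    rw [Set.union_compl_self, h0, hAc, measure_univ] at hle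
    simp at hle
  obtain ⟨g₀, hg₀⟩ := hA_ne
  -- support ⊆ A
  have hsupp : measureSupport μ ⊆ A := by
    intro g hg
    by_contra hgA
    have := hg Aᶜ hA_closed.isOpen_compl hgA
    rw [hAc] at this
    exact lt_irrefl _ this
  -- the stabilizer subgroup
  have hinv : ∀ g : G, ∀ y : H, π g⁻¹ (π g y) = y := by
    intro g y
    have h1 : π (g⁻¹ * g) y = y := by rw [inv_mul_cancel, hπ_one]; rfl
    rw [hπ_mul] at h1
    exact h1
  set K : Subgroup G :=
    { carrier := {g | π g x = x}
      one_mem' := by simp [hπ_one]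
      mul_mem' := by
        intro a b ha hb
        simp only [Set.mem_setOf_eq] at *
        rw [hπ_mul]
        simp [ha, hb]
      inv_mem' := by
        intro a ha
        simp only [Set.mem_setOf_eq] at *
        have h1 := hinv a x
        rw [ha] at h1
        exact h1 } with hK
  have hK_closed : IsClosed (K : Set G) := isClosed_eq (hπ_cont x) continuous_const
  -- A ⊆ g₀ K
  have hcoset : A ⊆ (fun h => g₀ * h) '' (K : Set G) := by
    intro h hh
    refine ⟨g₀⁻¹ * h, ?_, by group⟩
    show π (g₀⁻¹ * h) x = x
    rw [hπ_mul]
    show π g₀⁻¹ (π h x) = x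
    rw [show π h x = ξ • x from hh]
    have h1 := hinv g₀ x
    rw [show π g₀ x = ξ • x from hg₀] at h1
    exact h1
  -- strict aperiodicity forces K = univ
  have hKuniv : (K : Set G) = Set.univ := by
    by_contra hne
    exact hμ ⟨K, g₀, hK_closed, hne, hsupp.trans hcoset⟩
  have hg₀K : g₀ ∈ (K : Set G) := hKuniv ▸ Set.mem_univ g₀
  have hfix : π g₀ x = x := hg₀K
  rw [show π g₀ x = ξ • x from hg₀] at hfix
  -- ξ • x = x implies ξ = 1
  have hsub : (ξ - 1) • x = 0 := by rw [sub_smul, one_smul, hfix, sub_self]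
  rcases smul_eq_zero.mp hsub with h | h
  · exact sub_eq_zero.mp h
  · exact absurd h hx
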